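/- arXiv:2405.12702 — 2 statements merged into one kernel-verified Lean document; each statement's English description precedes it below -/
import Mathlib

section
/- Let X^σ = ℝ^{dn} × ℝ^{dn} × G^σ with norm ‖(p,q,α)‖²_{X^σ} = |p|² + |q|² + ‖ω^σα‖²_{L²}. Under assumptions V ∈ C²_b(ℝ^{dn}; ℝ) and ω^{3/2−σ}χ ∈ L² with σ ∈ [1/2,1], the nonlinearity 𝒩 : X^σ → X^σ defined by (𝒩(u))_{p_j} = −∇_{q_j}V(q) − ∇_{q_j}I_j(q,α), (𝒩(u))_{q_j} = ∇f_j(p_j), (𝒩(u))_α(k) = −i Σ_{j=1}^n (χ(k)/√ω(k)) e^{−2πik·q_j}, maps bounded sets of X^σ to bounded sets of X^σ. -/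
open MeasureTheory

noncomputable section

/-- The phase space X = ℝ^{dn} × ℝ^{dn} × {fields}: momenta (p_1,…,p_n), positions
(flattened into ℝ^{n×d}) and the field α : ℝ^d → ℂ. -/
abbrev PhaseSpace (d n : ℕ) :=
  (Fin n → EuclideanSpace ℝ (Fin d)) × EuclideanSpace ℝ (Fin n × Fin d) ×
    (EuclideanSpace ℝ (Fin d) → ℂ)

/-- The dispersion relation ω(k) = √(|k|² + m²). -/
def omega (d : ℕ) (m : ℝ) (k : EuclideanSpace ℝ (Fin d)) : ℝ :=
  Real.sqrt (‖k‖ ^ 2 + m ^ 2)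

/-- The j-th position block q_j ∈ ℝ^d of q ∈ ℝ^{n×d}. -/
def qblock (d n : ℕ) (q : EuclideanSpace ℝ (Fin n × Fin d)) (j : Fin n) :
    EuclideanSpace ℝ (Fin d) :=
  WithLp.toLp 2 (fun i => q (j, i))

/-- The phase 2π k·x. -/
def phase (d : ℕ) (k x : EuclideanSpace ℝ (Fin d)) : ℝ :=
  2 * Real.pi * ∑ i, k i * x i

/-- The i-th component of
∇_{q_j} I_j(q,α) = ∫ 2πi k (χ(k)/√ω(k)) [α(k) e^{2πi k·q_j} − conj(α(k)) e^{−2πi k·q_j}] dk. -/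
def gradI (d : ℕ) (m : ℝ) (χ : EuclideanSpace ℝ (Fin d) → ℝ)
    (qj : EuclideanSpace ℝ (Fin d)) (α : EuclideanSpace ℝ (Fin d) → ℂ) (i : Fin d) : ℂ :=
  ∫ k : EuclideanSpace ℝ (Fin d),
    2 * (Real.pi : ℂ) * Complex.I * ((k i : ℝ) : ℂ) *
      ((χ k / Real.sqrt (omega d m k) : ℝ) : ℂ) *
      (α k * Complex.exp (((phase d k qj : ℝ) : ℂ) * Complex.I) -
        (starRingEnd ℂ) (α k) * Complex.exp (-(((phase d k qj : ℝ) : ℂ) * Complex.I)))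

/-- The nonlinearity 𝒩 of the particle-field equation:
(𝒩(u))_{p_j} = −∇_{q_j}V(q) − ∇_{q_j}I_j(q,α), (𝒩(u))_{q_j} = ∇f_j(p_j),
(𝒩(u))_α(k) = −i Σ_j (χ(k)/√ω(k)) e^{−2πik·q_j}. -/
def NL (d n : ℕ) (m : ℝ) (χ : EuclideanSpace ℝ (Fin d) → ℝ)
    (V : EuclideanSpace ℝ (Fin n × Fin d) → ℝ)
    (f : Fin n → EuclideanSpace ℝ (Fin d) → ℝ)
    (u : PhaseSpace d n) : PhaseSpace d n :=
  (fun j => (WithLp.toLp 2 (fun i => -(gradient V u.2.1 (j, i)) -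
      (gradI d m χ (qblock d n u.2.1 j) u.2.2 i).re) : EuclideanSpace ℝ (Fin d)),
    (WithLp.toLp 2 (fun ji : Fin n × Fin d => gradient (f ji.1) (u.1 ji.1) ji.2) : EuclideanSpace ℝ (Fin n × Fin d)),
    fun k => -Complex.I * ∑ j : Fin n, ((χ k / Real.sqrt (omega d m k) : ℝ) : ℂ) *
      Complex.exp (-(((phase d k (qblock d n u.2.1 j) : ℝ) : ℂ) * Complex.I)))

/-- The X^σ norm: ‖(p,q,α)‖² = Σ|p_j|² + Σ|q_j|² + ‖ω^σ α‖²_{L²}. -/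
def normX (d n : ℕ) (σ m : ℝ) (u : PhaseSpace d n) : ℝ :=
  Real.sqrt ((∑ j, ‖u.1 j‖ ^ 2) + ‖u.2.1‖ ^ 2 +
    ((eLpNorm (fun k => ((omega d m k ^ σ : ℝ) : ℂ) * u.2.2 k) 2 volume).toReal) ^ 2)

/-- The free field flow Φ^f_t(p,q,α) = (p, q, e^{−itω}α). -/
def freeFlow (d n : ℕ) (m : ℝ) (t : ℝ) (u : PhaseSpace d n) : PhaseSpace d n :=
  (u.1, u.2.1, fun k => Complex.exp (-(Complex.I * (t : ℂ) * ((omega d m k : ℝ) : ℂ))) * u.2.2 k)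

/-- The non-autonomous vector field v(t,u) = Φ^f_{−t} ∘ 𝒩 ∘ Φ^f_t(u). -/
def vfield (d n : ℕ) (m : ℝ) (χ : EuclideanSpace ℝ (Fin d) → ℝ)
    (V : EuclideanSpace ℝ (Fin n × Fin d) → ℝ)
    (f : Fin n → EuclideanSpace ℝ (Fin d) → ℝ)
    (t : ℝ) (u : PhaseSpace d n) : PhaseSpace d n :=
  freeFlow d n m (-t) (NL d n m χ V f (freeFlow d n m t u))

end

noncomputable section

namespace NLaux

lemma coord_abs_le_norm {ι : Type*} [Fintype ι] (v : EuclideanSpace ℝ ι) (i : ι) :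
    |v i| ≤ ‖v‖ := by
  rw [EuclideanSpace.norm_eq, ← Real.sqrt_sq_eq_abs]
  apply Real.sqrt_le_sqrt
  have := Finset.single_le_sum (f := fun j => ‖v j‖ ^ 2)
    (fun j _ => sq_nonneg _) (Finset.mem_univ i)
  simpa [Real.norm_eq_abs, sq_abs] using this

lemma norm_gradient_eq' {F : Type*} [NormedAddCommGroup F] [InnerProductSpace ℝ F]
    [CompleteSpace F] (f : F → ℝ) (x : F) : ‖gradient f x‖ = ‖fderiv ℝ f x‖ :=
  LinearIsometryEquiv.norm_map (InnerProductSpace.toDual ℝ F).symm _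

lemma le_of_sq_le_sq' {a b : ℝ} (ha : 0 ≤ a) (hb : 0 ≤ b) (h : a ^ 2 ≤ b ^ 2) : a ≤ b := by
  nlinarith

lemma grad_sqrt_le {d : ℕ} (M : ℝ) (hM : 0 < M) (p : EuclideanSpace ℝ (Fin d)) :
    ‖gradient (fun p : EuclideanSpace ℝ (Fin d) => Real.sqrt (‖p‖ ^ 2 + M ^ 2)) p‖ ≤ 1 := by
  set T : ℝ := ‖p‖ ^ 2 + M ^ 2 with hT
  have hTpos : 0 < T := by positivity
  have hg : HasFDerivAt (fun x : EuclideanSpace ℝ (Fin d) => ‖x‖ ^ 2 + M ^ 2)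
      (2 • (innerSL ℝ p)) p := by
    simpa using ((hasFDerivAt_id p).norm_sq.add_const (M ^ 2))
  have hs : HasDerivAt Real.sqrt (1 / (2 * Real.sqrt T)) T :=
    Real.hasDerivAt_sqrt hTpos.ne'
  have h : HasFDerivAt (fun x : EuclideanSpace ℝ (Fin d) => Real.sqrt (‖x‖ ^ 2 + M ^ 2))
      ((1 / (2 * Real.sqrt T)) • (2 • (innerSL ℝ p))) p := hs.comp_hasFDerivAt p hg
  rw [norm_gradient_eq', h.fderiv, norm_smul, two_smul]
  have h1 : ‖innerSL ℝ p + innerSL ℝ p‖ ≤ 2 * ‖p‖ := by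
    refine (norm_add_le _ _).trans ?_
    rw [innerSL_apply_norm]; ring_nf; rfl
  have hsT : 0 < Real.sqrt T := Real.sqrt_pos.mpr hTpos
  have hpT : ‖p‖ ≤ Real.sqrt T := by
    rw [hT]
    nlinarith [Real.sq_sqrt hTpos.le, Real.sqrt_nonneg T, norm_nonneg p]
  calc ‖1 / (2 * Real.sqrt T)‖ * ‖innerSL ℝ p + innerSL ℝ p‖
      ≤ (1 / (2 * Real.sqrt T)) * (2 * ‖p‖) := by
        rw [Real.norm_eq_abs, abs_of_pos (by positivity)]
        exact mul_le_mul_of_nonneg_left h1 (by positivity)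
    _ = ‖p‖ / Real.sqrt T := by field_simp
    _ ≤ 1 := by rw [div_le_one hsT]; exact hpT

lemma grad_quad_le {d : ℕ} (M : ℝ) (hM : 0 < M) (p : EuclideanSpace ℝ (Fin d)) :
    ‖gradient (fun p : EuclideanSpace ℝ (Fin d) => ‖p‖ ^ 2 / (2 * M)) p‖ ≤ ‖p‖ / M := by
  have hg : HasFDerivAt (fun x : EuclideanSpace ℝ (Fin d) => ‖x‖ ^ 2)
      (2 • (innerSL ℝ p)) p := by
    simpa using (hasFDerivAt_id p).norm_sq
  have h : HasFDerivAt (fun x : EuclideanSpace ℝ (Fin d) => ‖x‖ ^ 2 / (2 * M))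
      ((2 * M)⁻¹ • (2 • (innerSL ℝ p))) p := by
    simp only [div_eq_inv_mul]
    exact hg.const_mul _ |>.congr_fderiv (by module)
  rw [norm_gradient_eq', h.fderiv, norm_smul, two_smul]
  have h1 : ‖innerSL ℝ p + innerSL ℝ p‖ ≤ 2 * ‖p‖ := by
    refine (norm_add_le _ _).trans ?_
    rw [innerSL_apply_norm]; ring_nf; rfl
  calc ‖(2 * M)⁻¹‖ * ‖innerSL ℝ p + innerSL ℝ p‖
      ≤ (2 * M)⁻¹ * (2 * ‖p‖) := by
        rw [Real.norm_eq_abs, abs_of_pos (by positivity)]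
        exact mul_le_mul_of_nonneg_left h1 (by positivity)
    _ = ‖p‖ / M := by field_simp

variable {d : ℕ} {m : ℝ} (k : EuclideanSpace ℝ (Fin d))

lemma omega_pos (hm : 0 < m) : 0 < omega d m k := Real.sqrt_pos.mpr (by positivity)

lemma m_le_omega (hm : 0 < m) : m ≤ omega d m k := by
  rw [omega, Real.le_sqrt hm.le (by positivity)]
  nlinarith [sq_nonneg (‖k‖)]

lemma norm_le_omega : ‖k‖ ≤ omega d m k := by
  rw [omega, Real.le_sqrt (norm_nonneg _) (by positivity)]
  nlinarith [sq_nonneg m]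

lemma field_pt (hm : 0 < m) (σ : ℝ) (hσ : σ ≤ 1) :
    omega d m k ^ σ / Real.sqrt (omega d m k) ≤
      m ^ (2 * σ - 2) * omega d m k ^ ((3 : ℝ) / 2 - σ) := by
  have hω := omega_pos k hm
  rw [Real.sqrt_eq_rpow, ← Real.rpow_sub hω]
  have h1 : omega d m k ^ (σ - 1 / 2) =
      omega d m k ^ (2 * σ - 2) * omega d m k ^ ((3 : ℝ) / 2 - σ) := by
    rw [← Real.rpow_add hω]; ring_nf
  rw [h1]
  have h2 : omega d m k ^ (2 * σ - 2) ≤ m ^ (2 * σ - 2) :=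
    Real.rpow_le_rpow_of_nonpos hm (m_le_omega k hm) (by linarith)
  exact mul_le_mul_of_nonneg_right h2 (Real.rpow_nonneg hω.le _)

lemma gradI_pt (hm : 0 < m) (σ : ℝ) (i : Fin d) :
    |k i| / Real.sqrt (omega d m k) ≤
      omega d m k ^ ((3 : ℝ) / 2 - σ) * omega d m k ^ σ / m := by
  have hω := omega_pos k hm
  have hsω : 0 < Real.sqrt (omega d m k) := Real.sqrt_pos.mpr hω
  rw [div_le_div_iff₀ hsω hm]
  have h1 : omega d m k ^ ((3 : ℝ) / 2 - σ) * omega d m k ^ σ * Real.sqrt (omega d m k)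
      = omega d m k * omega d m k := by
    rw [Real.sqrt_eq_rpow, ← Real.rpow_add hω, ← Real.rpow_add hω,
      show (3 : ℝ) / 2 - σ + σ + 1 / 2 = 2 by ring]
    rw [show (2 : ℝ) = ((2 : ℕ) : ℝ) by norm_num, Real.rpow_natCast]; ring
  rw [h1]
  have h2 : |k i| ≤ omega d m k := (coord_abs_le_norm k i).trans (norm_le_omega k)
  exact mul_le_mul h2 (m_le_omega k hm) hm.le hω.le

variable {X : Type*} [MeasurableSpace X] {μ : Measure X}

lemma two_conj : Real.HolderConjugate 2 2 := Real.HolderConjugate.two_two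

lemma memLp_ofReal_two {E : Type*} [NormedAddCommGroup E] {F : X → E}
    (hF : MemLp F 2 μ) : MemLp F (ENNReal.ofReal 2) μ := by
  simpa [ENNReal.ofReal_ofNat] using hF

lemma integrable_mul_of_memL2 {E E' : Type*} [NormedAddCommGroup E] [NormedAddCommGroup E']
    {F : X → E} {W : X → E'} (hF : MemLp F 2 μ) (hW : MemLp W 2 μ) :
    Integrable (fun k => ‖F k‖ * ‖W k‖) μ := by
  have h := (hW.norm.smul (hF.norm) (p := 2) (q := 2) (r := 1))
  rw [memLp_one_iff_integrable] at h
  exact h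

lemma integral_norm_mul_le {E E' : Type*} [NormedAddCommGroup E] [NormedAddCommGroup E']
    {F : X → E} {W : X → E'} (hF : MemLp F 2 μ) (hW : MemLp W 2 μ) :
    ∫ k, ‖F k‖ * ‖W k‖ ∂μ ≤ (eLpNorm F 2 μ).toReal * (eLpNorm W 2 μ).toReal := by
  have hhold := integral_mul_norm_le_Lp_mul_Lq (μ := μ) two_conj
    (memLp_ofReal_two hF.norm) (memLp_ofReal_two hW.norm)
  simp only [norm_norm] at hhold
  have e1 : (eLpNorm F 2 μ).toReal = (∫ k, ‖F k‖ ^ (2:ℝ) ∂μ) ^ ((1:ℝ)/2) := by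
    rw [hF.eLpNorm_eq_integral_rpow_norm two_ne_zero ENNReal.ofNat_ne_top]
    rw [ENNReal.toReal_ofReal (by positivity)]
    norm_num
  have e2 : (eLpNorm W 2 μ).toReal = (∫ k, ‖W k‖ ^ (2:ℝ) ∂μ) ^ ((1:ℝ)/2) := by
    rw [hW.eLpNorm_eq_integral_rpow_norm two_ne_zero ENNReal.ofNat_ne_top]
    rw [ENNReal.toReal_ofReal (by positivity)]
    norm_num
  rw [e1, e2]
  exact hhold

end NLaux

open NLaux

/-- Under V ∈ C²_b(ℝ^{dn}; ℝ) and ω^{3/2−σ}χ ∈ L² with σ ∈ [1/2,1], the nonlinearity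
𝒩 : X^σ → X^σ maps bounded sets of X^σ to bounded sets of X^σ. -/


theorem NL_bounded_on_bounded (d n : ℕ) (m σ : ℝ) (hm : 0 < m)
    (hσ : σ ∈ Set.Icc (1 / 2 : ℝ) 1)
    (χ : EuclideanSpace ℝ (Fin d) → ℝ)
    (hχ : MemLp (fun k => omega d m k ^ ((3 : ℝ) / 2 - σ) * χ k) 2 volume)
    (V : EuclideanSpace ℝ (Fin n × Fin d) → ℝ)
    (hV : ContDiff ℝ 2 V)
    (hV1 : ∃ C, ∀ q, ‖gradient V q‖ ≤ C)
    (hV2 : ∃ C, ∀ q, ‖fderiv ℝ (fderiv ℝ V) q‖ ≤ C)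
    (M : Fin n → ℝ) (hM : ∀ j, 0 < M j)
    (f : Fin n → EuclideanSpace ℝ (Fin d) → ℝ)
    (hf : (∀ j p, f j p = Real.sqrt (‖p‖ ^ 2 + M j ^ 2)) ∨
          (∀ j p, f j p = ‖p‖ ^ 2 / (2 * M j))) :
    ∀ R : ℝ, ∃ C : ℝ, ∀ u : PhaseSpace d n,
      MemLp (fun k => ((omega d m k ^ σ : ℝ) : ℂ) * u.2.2 k) 2 volume →
      normX d n σ m u ≤ R → normX d n σ m (NL d n m χ V f u) ≤ C := by
  obtain ⟨CV, hCV⟩ := hV1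
  intro R
  by_cases hR : 0 ≤ R
  case neg =>
    refine ⟨0, fun u _ hu => absurd ?_ hR⟩
    refine le_trans ?_ hu
    simp only [normX]
    exact Real.sqrt_nonneg _
  have hCV0 : 0 ≤ CV := le_trans (norm_nonneg _) (hCV 0)
  set F : EuclideanSpace ℝ (Fin d) → ℝ :=
    fun k => omega d m k ^ ((3 : ℝ) / 2 - σ) * χ k with hFdef
  set Cχ : ℝ := (eLpNorm F 2 volume).toReal with hCχdef
  have hCχ0 : 0 ≤ Cχ := ENNReal.toReal_nonneg
  set CI : ℝ := 4 * Real.pi / m * (Cχ * R) with hCIdef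
  have hCI0 : 0 ≤ CI := by
    have hπ := Real.pi_pos
    exact mul_nonneg (by positivity) (mul_nonneg hCχ0 hR)
  set c : ℝ := m ^ (2 * σ - 2 : ℝ) with hcdef
  have hc0 : 0 ≤ c := Real.rpow_nonneg hm.le _
  set Cα : ℝ := (eLpNorm (fun k => ((n : ℝ) * c) * F k) 2 volume).toReal with hCαdef
  set B : ℝ := max 1 (R * ∑ j, (M j)⁻¹) with hBdef
  have hB0 : (0:ℝ) ≤ B := le_trans zero_le_one (le_max_left _ _)
  refine ⟨Real.sqrt ((n : ℝ) * ((d : ℝ) * (CV + CI) ^ 2) + (n : ℝ) * B ^ 2 + Cα ^ 2), ?_⟩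
  intro u hmem hle
  have hω : ∀ k : EuclideanSpace ℝ (Fin d), 0 < omega d m k := fun k => omega_pos k hm
  set W : EuclideanSpace ℝ (Fin d) → ℂ :=
    fun k => ((omega d m k ^ σ : ℝ) : ℂ) * u.2.2 k with hWdef
  -- extract bounds from hle
  simp only [normX] at hle
  have hS0 : (0:ℝ) ≤ (∑ j, ‖u.1 j‖ ^ 2) + ‖u.2.1‖ ^ 2 +
      ((eLpNorm W 2 volume).toReal) ^ 2 := by positivity
  have hS : (∑ j, ‖u.1 j‖ ^ 2) + ‖u.2.1‖ ^ 2 + ((eLpNorm W 2 volume).toReal) ^ 2 ≤ R ^ 2 := by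
    nlinarith [Real.sq_sqrt hS0, Real.sqrt_nonneg ((∑ j, ‖u.1 j‖ ^ 2) + ‖u.2.1‖ ^ 2 +
      ((eLpNorm W 2 volume).toReal) ^ 2)]
  have hpj : ∀ j, ‖u.1 j‖ ≤ R := by
    intro j
    refine le_of_sq_le_sq' (norm_nonneg _) hR ?_
    have h1 : ‖u.1 j‖ ^ 2 ≤ ∑ x, ‖u.1 x‖ ^ 2 := by
      simpa using Finset.single_le_sum (f := fun j => ‖u.1 j‖ ^ 2)
        (fun j _ => sq_nonneg _) (Finset.mem_univ j)
    nlinarith [sq_nonneg ‖u.2.1‖, sq_nonneg ((eLpNorm W 2 volume).toReal)]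
  have hWle : (eLpNorm W 2 volume).toReal ≤ R := by
    refine le_of_sq_le_sq' ENNReal.toReal_nonneg hR ?_
    have h1 : (0:ℝ) ≤ ∑ j, ‖u.1 j‖ ^ 2 := by positivity
    nlinarith [sq_nonneg ‖u.2.1‖]
  -- gradI bound
  have hgradI : ∀ (qj : EuclideanSpace ℝ (Fin d)) (i : Fin d),
      ‖gradI d m χ qj u.2.2 i‖ ≤ CI := by
    intro qj i
    rw [gradI]
    set g : EuclideanSpace ℝ (Fin d) → ℂ := fun k =>
      2 * (Real.pi : ℂ) * Complex.I * ((k i : ℝ) : ℂ) *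
        ((χ k / Real.sqrt (omega d m k) : ℝ) : ℂ) *
        (u.2.2 k * Complex.exp (((phase d k qj : ℝ) : ℂ) * Complex.I) -
          (starRingEnd ℂ) (u.2.2 k) *
            Complex.exp (-(((phase d k qj : ℝ) : ℂ) * Complex.I))) with hgdef
    have hpt : ∀ k, ‖g k‖ ≤ (4 * Real.pi / m) * (‖F k‖ * ‖W k‖) := by
      intro k
      have hπ := Real.pi_pos
      have he1 : ‖Complex.exp (((phase d k qj : ℝ) : ℂ) * Complex.I)‖ = 1 := by
        rw [Complex.norm_exp_ofReal_mul_I]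
      have he2 : ‖Complex.exp (-(((phase d k qj : ℝ) : ℂ) * Complex.I))‖ = 1 := by
        rw [show -(((phase d k qj : ℝ) : ℂ) * Complex.I)
            = ((-(phase d k qj) : ℝ) : ℂ) * Complex.I by push_cast; ring]
        rw [Complex.norm_exp_ofReal_mul_I]
      have hdiff : ‖u.2.2 k * Complex.exp (((phase d k qj : ℝ) : ℂ) * Complex.I) -
          (starRingEnd ℂ) (u.2.2 k) *
            Complex.exp (-(((phase d k qj : ℝ) : ℂ) * Complex.I))‖ ≤ 2 * ‖u.2.2 k‖ := by
        refine (norm_sub_le _ _).trans ?_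
        rw [norm_mul, norm_mul, he1, he2, RCLike.norm_conj]
        ring_nf; rfl
      have hng : ‖g k‖ = 2 * Real.pi * |k i| * (|χ k| / Real.sqrt (omega d m k)) *
          ‖u.2.2 k * Complex.exp (((phase d k qj : ℝ) : ℂ) * Complex.I) -
            (starRingEnd ℂ) (u.2.2 k) *
              Complex.exp (-(((phase d k qj : ℝ) : ℂ) * Complex.I))‖ := by
        rw [hgdef]
        simp only [norm_mul, Complex.norm_real, Complex.norm_I, Complex.norm_ofNat,
          Real.norm_eq_abs, abs_div, abs_of_nonneg (Real.sqrt_nonneg (omega d m k)),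
          abs_of_pos hπ]
        ring
      rw [hng]
      have hkey := gradI_pt k hm σ i
      have hnF : ‖F k‖ = omega d m k ^ ((3:ℝ)/2 - σ) * |χ k| := by
        rw [hFdef]
        simp only [Real.norm_eq_abs, abs_mul, abs_of_nonneg (Real.rpow_nonneg (hω k).le _)]
      have hnW : ‖W k‖ = omega d m k ^ σ * ‖u.2.2 k‖ := by
        rw [hWdef]
        simp only [norm_mul, Complex.norm_real, Real.norm_eq_abs,
          abs_of_nonneg (Real.rpow_nonneg (hω k).le _)]
      rw [hnF, hnW]
      calc 2 * Real.pi * |k i| * (|χ k| / Real.sqrt (omega d m k)) *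
            ‖u.2.2 k * Complex.exp (((phase d k qj : ℝ) : ℂ) * Complex.I) -
              (starRingEnd ℂ) (u.2.2 k) *
                Complex.exp (-(((phase d k qj : ℝ) : ℂ) * Complex.I))‖
          ≤ 2 * Real.pi * |k i| * (|χ k| / Real.sqrt (omega d m k)) * (2 * ‖u.2.2 k‖) := by
            refine mul_le_mul_of_nonneg_left hdiff ?_
            have h0 := Real.sqrt_nonneg (omega d m k)
            positivity
        _ = 4 * Real.pi * ((|k i| / Real.sqrt (omega d m k)) * |χ k|) * ‖u.2.2 k‖ := by
            ring
        _ ≤ 4 * Real.pi * ((omega d m k ^ ((3:ℝ)/2 - σ) * omega d m k ^ σ / m) * |χ k|) *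
              ‖u.2.2 k‖ := by
            gcongr
        _ = (4 * Real.pi / m) * (omega d m k ^ ((3:ℝ)/2 - σ) * |χ k| *
              (omega d m k ^ σ * ‖u.2.2 k‖)) := by
            ring
    by_cases hg : Integrable g volume
    · calc ‖∫ k, g k‖ ≤ ∫ k, ‖g k‖ := norm_integral_le_integral_norm g
        _ ≤ ∫ k, (4 * Real.pi / m) * (‖F k‖ * ‖W k‖) := by
            refine integral_mono hg.norm
              (((integrable_mul_of_memL2 hχ hmem).const_mul _)) hpt
        _ = (4 * Real.pi / m) * ∫ k, ‖F k‖ * ‖W k‖ := integral_const_mul _ _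
        _ ≤ (4 * Real.pi / m) * (Cχ * R) := by
            have hπ := Real.pi_pos
            refine mul_le_mul_of_nonneg_left ?_ (by positivity)
            exact le_trans (integral_norm_mul_le hχ hmem)
              (mul_le_mul_of_nonneg_left hWle hCχ0)
        _ = CI := by rw [hCIdef]
    · rw [integral_undef hg, norm_zero]
      exact hCI0
  -- field part bound
  have hfin : eLpNorm (fun k => ((n : ℝ) * c) * F k) 2 volume ≠ ⊤ := (hχ.const_mul _).2.ne
  have hαb : (eLpNorm (fun k => ((omega d m k ^ σ : ℝ) : ℂ) * (NL d n m χ V f u).2.2 k)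
      2 volume).toReal ≤ Cα := by
    rw [hCαdef]
    refine ENNReal.toReal_mono hfin (eLpNorm_mono ?_)
    intro k
    show ‖((omega d m k ^ σ : ℝ) : ℂ) *
        (-Complex.I * ∑ j : Fin n, ((χ k / Real.sqrt (omega d m k) : ℝ) : ℂ) *
          Complex.exp (-(((phase d k (qblock d n u.2.1 j) : ℝ) : ℂ) * Complex.I)))‖
      ≤ ‖((n : ℝ) * c) * F k‖
    have hsum : ‖∑ j : Fin n, ((χ k / Real.sqrt (omega d m k) : ℝ) : ℂ) *
        Complex.exp (-(((phase d k (qblock d n u.2.1 j) : ℝ) : ℂ) * Complex.I))‖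
        ≤ (n : ℝ) * (|χ k| / Real.sqrt (omega d m k)) := by
      refine (norm_sum_le _ _).trans ?_
      have hterm : ∀ j : Fin n, ‖((χ k / Real.sqrt (omega d m k) : ℝ) : ℂ) *
          Complex.exp (-(((phase d k (qblock d n u.2.1 j) : ℝ) : ℂ) * Complex.I))‖
          = |χ k| / Real.sqrt (omega d m k) := by
        intro j
        rw [norm_mul]
        simp [Complex.norm_exp, Complex.norm_real,
          abs_div, abs_of_nonneg (Real.sqrt_nonneg (omega d m k))]
      rw [Finset.sum_congr rfl (fun j _ => hterm j)]
      simp [Finset.sum_const, nsmul_eq_mul]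
    have hL : ‖((omega d m k ^ σ : ℝ) : ℂ) *
        (-Complex.I * ∑ j : Fin n, ((χ k / Real.sqrt (omega d m k) : ℝ) : ℂ) *
          Complex.exp (-(((phase d k (qblock d n u.2.1 j) : ℝ) : ℂ) * Complex.I)))‖
        ≤ omega d m k ^ σ * ((n : ℝ) * (|χ k| / Real.sqrt (omega d m k))) := by
      rw [norm_mul, norm_mul, norm_neg, Complex.norm_I, one_mul, Complex.norm_real,
        Real.norm_eq_abs, abs_of_nonneg (Real.rpow_nonneg (hω k).le _)]
      exact mul_le_mul_of_nonneg_left hsum (Real.rpow_nonneg (hω k).le _)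
    refine hL.trans ?_
    have hRn : ‖((n : ℝ) * c) * F k‖
        = (n : ℝ) * c * (omega d m k ^ ((3 : ℝ) / 2 - σ) * |χ k|) := by
      rw [hFdef]
      simp only [Real.norm_eq_abs, abs_mul, Nat.abs_cast, abs_of_nonneg hc0,
        abs_of_nonneg (Real.rpow_nonneg (hω k).le _)]
    rw [hRn]
    have hfp := field_pt k hm σ hσ.2
    have e1 : omega d m k ^ σ * ((n : ℝ) * (|χ k| / Real.sqrt (omega d m k)))
        = ((n : ℝ) * |χ k|) * (omega d m k ^ σ / Real.sqrt (omega d m k)) := by ring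
    have e2 : (n : ℝ) * c * (omega d m k ^ ((3 : ℝ) / 2 - σ) * |χ k|)
        = ((n : ℝ) * |χ k|) * (c * omega d m k ^ ((3 : ℝ) / 2 - σ)) := by ring
    rw [e1, e2]
    exact mul_le_mul_of_nonneg_left hfp (by positivity)
  -- gradient bound
  have hgradB : ∀ j : Fin n, ‖gradient (f j) (u.1 j)‖ ≤ B := by
    intro j
    rcases hf with hf1 | hf2
    · have e : f j = fun p : EuclideanSpace ℝ (Fin d) => Real.sqrt (‖p‖ ^ 2 + M j ^ 2) :=
        funext (hf1 j)
      rw [e]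
      exact (grad_sqrt_le (M j) (hM j) _).trans (le_max_left _ _)
    · have e : f j = fun p : EuclideanSpace ℝ (Fin d) => ‖p‖ ^ 2 / (2 * M j) :=
        funext (hf2 j)
      rw [e]
      refine (grad_quad_le (M j) (hM j) _).trans (le_trans ?_ (le_max_right _ _))
      calc ‖u.1 j‖ / M j ≤ R / M j := by gcongr; exacts [(hM j).le, hpj j]
        _ = R * (M j)⁻¹ := div_eq_mul_inv _ _
        _ ≤ R * ∑ j', (M j')⁻¹ := by
            refine mul_le_mul_of_nonneg_left ?_ hR
            exact Finset.single_le_sum (f := fun j' => (M j')⁻¹)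
              (fun j' _ => inv_nonneg.mpr (hM j').le) (Finset.mem_univ j)
  -- assembly
  simp only [normX]
  refine Real.sqrt_le_sqrt ?_
  have hA : ∑ j, ‖(NL d n m χ V f u).1 j‖ ^ 2 ≤ (n : ℝ) * ((d : ℝ) * (CV + CI) ^ 2) := by
    have hone : ∀ j : Fin n, ‖(NL d n m χ V f u).1 j‖ ^ 2 ≤ (d : ℝ) * (CV + CI) ^ 2 := by
      intro j
      rw [EuclideanSpace.norm_eq, Real.sq_sqrt (by positivity)]
      have hcomp : ∀ i : Fin d, ‖(NL d n m χ V f u).1 j i‖ ^ 2 ≤ (CV + CI) ^ 2 := by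
        intro i
        show ‖-(gradient V u.2.1 (j, i)) -
            (gradI d m χ (qblock d n u.2.1 j) u.2.2 i).re‖ ^ 2 ≤ (CV + CI) ^ 2
        have h2 : |(-(gradient V u.2.1 (j, i))) -
            (gradI d m χ (qblock d n u.2.1 j) u.2.2 i).re| ≤ CV + CI := by
          rw [show (-(gradient V u.2.1 (j, i))) -
              (gradI d m χ (qblock d n u.2.1 j) u.2.2 i).re
              = -((gradient V u.2.1 (j, i)) +
                (gradI d m χ (qblock d n u.2.1 j) u.2.2 i).re) by ring, abs_neg]
          refine (abs_add_le _ _).trans (add_le_add ?_ ?_)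
          · exact (coord_abs_le_norm _ _).trans (hCV _)
          · have h3 := hgradI (qblock d n u.2.1 j) i
            exact (Complex.abs_re_le_norm _).trans h3
        rw [Real.norm_eq_abs]
        exact pow_le_pow_left₀ (abs_nonneg _) h2 2
      calc ∑ i, ‖(NL d n m χ V f u).1 j i‖ ^ 2
          ≤ ∑ _i : Fin d, (CV + CI) ^ 2 := Finset.sum_le_sum (fun i _ => hcomp i)
        _ = (d : ℝ) * (CV + CI) ^ 2 := by simp [Finset.sum_const, nsmul_eq_mul]
    calc ∑ j, ‖(NL d n m χ V f u).1 j‖ ^ 2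
        ≤ ∑ _j : Fin n, (d : ℝ) * (CV + CI) ^ 2 := Finset.sum_le_sum (fun j _ => hone j)
      _ = (n : ℝ) * ((d : ℝ) * (CV + CI) ^ 2) := by simp [Finset.sum_const, nsmul_eq_mul]
  have hBq : ‖(NL d n m χ V f u).2.1‖ ^ 2 ≤ (n : ℝ) * B ^ 2 := by
    rw [EuclideanSpace.norm_eq, Real.sq_sqrt (by positivity)]
    have e : ∑ ji : Fin n × Fin d, ‖(NL d n m χ V f u).2.1 ji‖ ^ 2
        = ∑ j : Fin n, ∑ i : Fin d, ‖gradient (f j) (u.1 j) i‖ ^ 2 := by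
      rw [Fintype.sum_prod_type]; rfl
    rw [e]
    have e2 : ∀ j : Fin n, ∑ i : Fin d, ‖gradient (f j) (u.1 j) i‖ ^ 2
        = ‖gradient (f j) (u.1 j)‖ ^ 2 := by
      intro j
      rw [EuclideanSpace.norm_eq, Real.sq_sqrt (by positivity)]
    calc ∑ j : Fin n, ∑ i : Fin d, ‖gradient (f j) (u.1 j) i‖ ^ 2
        = ∑ j : Fin n, ‖gradient (f j) (u.1 j)‖ ^ 2 :=
          Finset.sum_congr rfl (fun j _ => e2 j)
      _ ≤ ∑ _j : Fin n, B ^ 2 :=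
          Finset.sum_le_sum (fun j _ => pow_le_pow_left₀ (norm_nonneg _) (hgradB j) 2)
      _ = (n : ℝ) * B ^ 2 := by simp [Finset.sum_const, nsmul_eq_mul]
  exact add_le_add (add_le_add hA hBq) (pow_le_pow_left₀ ENNReal.toReal_nonneg hαb 2)

end
end

section
/- Under the same assumptions (V ∈ C²_b, ω^{3/2−σ}χ ∈ L², σ ∈ [1/2,1]), the nonlinearity 𝒩 : X^σ → X^σ is continuous: if u_ℓ → u in X^σ, then 𝒩(u_ℓ) → 𝒩(u) in X^σ. -/
open MeasureTheory

section AuxOmega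

open MeasureTheory ENNReal

variable {d : ℕ} {m : ℝ}

lemma omega_pos (hm : 0 < m) (k : EuclideanSpace ℝ (Fin d)) : 0 < omega d m k := by
  apply Real.sqrt_pos.2; positivity

lemma m_le_omega (hm : 0 < m) (k : EuclideanSpace ℝ (Fin d)) : m ≤ omega d m k := by
  rw [omega, show (‖k‖^2 + m^2 : ℝ) = m^2 + ‖k‖^2 by ring]
  exact (Real.sqrt_sq hm.le).symm.trans_le (Real.sqrt_le_sqrt (by nlinarith [sq_nonneg ‖k‖]))

lemma norm_le_omega (k : EuclideanSpace ℝ (Fin d)) : ‖k‖ ≤ omega d m k := by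
  rw [omega]
  exact (Real.sqrt_sq (norm_nonneg k)).symm.trans_le (Real.sqrt_le_sqrt (by nlinarith [sq_nonneg m]))

lemma continuous_omega : Continuous (omega d m) :=
  ((continuous_norm.pow 2).add continuous_const).sqrt

lemma abs_apply_le_norm (k : EuclideanSpace ℝ (Fin d)) (i : Fin d) : |k i| ≤ ‖k‖ := by
  rw [EuclideanSpace.norm_eq, show |k i| = Real.sqrt (|k i| ^ 2) by
    rw [Real.sqrt_sq (abs_nonneg _)]]
  refine Real.sqrt_le_sqrt ?_
  rw [sq_abs]
  simp only [Real.norm_eq_abs, sq_abs]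
  exact Finset.single_le_sum (f := fun i => k i ^ 2) (fun i _ => sq_nonneg _) (Finset.mem_univ i)

lemma omega_rpow_le (hm : 0 < m) {s t : ℝ} (hst : s ≤ t) (k : EuclideanSpace ℝ (Fin d)) :
    omega d m k ^ s ≤ max 1 (m ^ (s - t)) * omega d m k ^ t := by
  have h0 := omega_pos hm k
  rcases le_or_gt 1 (omega d m k) with h | h
  · calc omega d m k ^ s ≤ omega d m k ^ t := Real.rpow_le_rpow_of_exponent_le h hst
    _ ≤ max 1 (m ^ (s - t)) * omega d m k ^ t := by
        nlinarith [Real.rpow_pos_of_pos h0 t, le_max_left (1:ℝ) (m ^ (s-t))]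
  · have hmw : m ≤ omega d m k := m_le_omega hm k
    have : omega d m k ^ s = omega d m k ^ (s - t) * omega d m k ^ t := by
      rw [← Real.rpow_add h0]; ring_nf
    rw [this]
    have h2 : omega d m k ^ (s - t) ≤ m ^ (s - t) :=
      Real.rpow_le_rpow_of_nonpos hm hmw (by linarith)
    have h3 := Real.rpow_pos_of_pos h0 t
    have h4 := le_max_right (1:ℝ) (m ^ (s-t))
    nlinarith [Real.rpow_nonneg h0.le (s-t)]

lemma lintegral_sq_lt_top {F : EuclideanSpace ℝ (Fin d) → ℝ} (hF : MemLp F 2 volume) :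
    ∫⁻ k, (‖F k‖₊ : ℝ≥0∞) ^ (2:ℝ) < ⊤ := by
  have h := hF.2
  rw [eLpNorm_eq_lintegral_rpow_enorm_toReal two_ne_zero ENNReal.ofNat_ne_top] at h
  simp only [ENNReal.toReal_ofNat, enorm_eq_nnnorm] at h
  by_contra hc
  push_neg at hc
  rw [top_le_iff.mp hc] at h
  rw [ENNReal.top_rpow_of_pos (by norm_num)] at h
  exact absurd h (lt_irrefl _)

lemma eLpNorm_two_eq {F : EuclideanSpace ℝ (Fin d) → ℝ} :
    eLpNorm F 2 volume = (∫⁻ k, (‖F k‖₊ : ℝ≥0∞) ^ (2:ℝ)) ^ ((1:ℝ)/2) := by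
  rw [eLpNorm_eq_lintegral_rpow_enorm_toReal two_ne_zero ENNReal.ofNat_ne_top]
  simp only [enorm_eq_nnnorm]
  norm_num

lemma cauchy_schwarz {F G : EuclideanSpace ℝ (Fin d) → ℝ}
    (hF : MemLp F 2 volume) (hG : MemLp G 2 volume) :
    MeasureTheory.Integrable (fun k => F k * G k) volume ∧
      ∫ k, |F k * G k| ≤ (eLpNorm F 2 volume).toReal * (eLpNorm G 2 volume).toReal := by
  have hpq : Real.HolderConjugate 2 2 := Real.HolderConjugate.two_two
  have hH := ENNReal.lintegral_mul_le_Lp_mul_Lq volume hpq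
    (hF.1.aemeasurable.nnnorm.coe_nnreal_ennreal)
    (hG.1.aemeasurable.nnnorm.coe_nnreal_ennreal)
  have hkey : ∫⁻ k, (‖F k * G k‖₊ : ℝ≥0∞) ≤ eLpNorm F 2 volume * eLpNorm G 2 volume := by
    calc ∫⁻ k, (‖F k * G k‖₊ : ℝ≥0∞)
        = ∫⁻ k, (‖F k‖₊ : ℝ≥0∞) * (‖G k‖₊ : ℝ≥0∞) := by
          simp_rw [nnnorm_mul, ENNReal.coe_mul]
      _ ≤ _ := hH
      _ = eLpNorm F 2 volume * eLpNorm G 2 volume := by rw [eLpNorm_two_eq, eLpNorm_two_eq]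
  have hint : MeasureTheory.Integrable (fun k => F k * G k) volume := by
    refine ⟨hF.1.mul hG.1, ?_⟩
    exact lt_of_le_of_lt hkey (ENNReal.mul_lt_top hF.eLpNorm_lt_top hG.eLpNorm_lt_top)
  refine ⟨hint, ?_⟩
  have heq : ∫ k, |F k * G k| = (∫⁻ k, (‖F k * G k‖₊ : ℝ≥0∞)).toReal := by
    have h2 := MeasureTheory.integral_norm_eq_lintegral_enorm (hF.1.mul hG.1)
    simp only [Real.norm_eq_abs, enorm_eq_nnnorm] at h2
    exact h2
  rw [heq, ← ENNReal.toReal_mul]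
  exact ENNReal.toReal_mono
    (ENNReal.mul_ne_top hF.eLpNorm_lt_top.ne hG.eLpNorm_lt_top.ne) hkey

end AuxOmega
noncomputable section AuxJ
open MeasureTheory ENNReal

variable {d : ℕ} {m σ : ℝ} {χ : EuclideanSpace ℝ (Fin d) → ℝ}

/-- The integrand of `gradI`. -/
def Jint (d : ℕ) (m : ℝ) (χ : EuclideanSpace ℝ (Fin d) → ℝ)
    (qj : EuclideanSpace ℝ (Fin d)) (α : EuclideanSpace ℝ (Fin d) → ℂ) (i : Fin d)
    (k : EuclideanSpace ℝ (Fin d)) : ℂ :=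
  2 * (Real.pi : ℂ) * Complex.I * ((k i : ℝ) : ℂ) *
    ((χ k / Real.sqrt (omega d m k) : ℝ) : ℂ) *
    (α k * Complex.exp (((phase d k qj : ℝ) : ℂ) * Complex.I) -
      (starRingEnd ℂ) (α k) * Complex.exp (-(((phase d k qj : ℝ) : ℂ) * Complex.I)))

lemma gradI_eq_Jint (qj : EuclideanSpace ℝ (Fin d)) (α : EuclideanSpace ℝ (Fin d) → ℂ)
    (i : Fin d) : gradI d m χ qj α i = ∫ k, Jint d m χ qj α i k := rfl

/-- F(k) = ω^{1/2−σ} χ(k). -/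
def FF (d : ℕ) (m σ : ℝ) (χ : EuclideanSpace ℝ (Fin d) → ℝ)
    (k : EuclideanSpace ℝ (Fin d)) : ℝ :=
  omega d m k ^ ((1:ℝ)/2 - σ) * χ k

/-- G(k) = ‖ω^σ α(k)‖. -/
def GG (d : ℕ) (m σ : ℝ) (α : EuclideanSpace ℝ (Fin d) → ℂ)
    (k : EuclideanSpace ℝ (Fin d)) : ℝ :=
  ‖((omega d m k ^ σ : ℝ) : ℂ) * α k‖

lemma exp_phase_norm (x : ℝ) : ‖Complex.exp ((x : ℂ) * Complex.I)‖ = 1 := by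
  simpa using Complex.abs_exp_ofReal_mul_I x

lemma exp_phase_norm' (x : ℝ) : ‖Complex.exp (-((x : ℂ) * Complex.I))‖ = 1 := by
  have : -((x:ℂ) * Complex.I) = ((-x : ℝ) : ℂ) * Complex.I := by push_cast; ring
  rw [this]; exact exp_phase_norm (-x)

lemma AB_norm_le (qj : EuclideanSpace ℝ (Fin d)) (α : EuclideanSpace ℝ (Fin d) → ℂ)
    (k : EuclideanSpace ℝ (Fin d)) :
    ‖α k * Complex.exp (((phase d k qj : ℝ) : ℂ) * Complex.I) -
      (starRingEnd ℂ) (α k) * Complex.exp (-(((phase d k qj : ℝ) : ℂ) * Complex.I))‖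
      ≤ 2 * ‖α k‖ := by
  refine (norm_sub_le _ _).trans ?_
  rw [norm_mul, norm_mul, exp_phase_norm, exp_phase_norm', RCLike.norm_conj]
  ring_nf
  norm_num

lemma J_norm_le (hm : 0 < m) (qj : EuclideanSpace ℝ (Fin d))
    (α : EuclideanSpace ℝ (Fin d) → ℂ) (i : Fin d) (k : EuclideanSpace ℝ (Fin d)) :
    ‖Jint d m χ qj α i k‖ ≤ 4 * Real.pi * |FF d m σ χ k * GG d m σ α k| := by
  have h0 := omega_pos hm (k := k)
  set w := omega d m k with hw
  have hsp : 0 < Real.sqrt w := Real.sqrt_pos.2 h0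
  have hnorm : ‖Jint d m χ qj α i k‖ =
      2 * Real.pi * |k i| * (|χ k| / Real.sqrt w) *
        ‖α k * Complex.exp (((phase d k qj : ℝ) : ℂ) * Complex.I) -
          (starRingEnd ℂ) (α k) * Complex.exp (-(((phase d k qj : ℝ) : ℂ) * Complex.I))‖ := by
    rw [Jint]
    rw [norm_mul, norm_mul, norm_mul, norm_mul, norm_mul]
    simp [Complex.norm_real, Complex.norm_I, Real.norm_eq_abs, abs_div,
      abs_of_pos Real.pi_pos, abs_of_pos hsp, ← hw]
  have hki : |k i| ≤ w := (abs_apply_le_norm k i).trans (norm_le_omega k)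
  have hAB := AB_norm_le qj α k
  have habs : |FF d m σ χ k * GG d m σ α k| = w ^ ((1:ℝ)/2) * |χ k| * ‖α k‖ := by
    rw [abs_mul, FF, GG, abs_mul, abs_of_pos (Real.rpow_pos_of_pos h0 _),
      abs_of_nonneg (norm_nonneg _), norm_mul, Complex.norm_real, Real.norm_eq_abs,
      abs_of_pos (Real.rpow_pos_of_pos h0 _)]
    rw [show w ^ ((1:ℝ)/2 - σ) * |χ k| * (w ^ σ * ‖α k‖) =
      (w ^ ((1:ℝ)/2 - σ) * w ^ σ) * |χ k| * ‖α k‖ by ring, ← Real.rpow_add h0]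
    norm_num
  rw [hnorm, habs]
  have h1 : 2 * Real.pi * |k i| * (|χ k| / Real.sqrt w) *
      ‖α k * Complex.exp (((phase d k qj : ℝ) : ℂ) * Complex.I) -
        (starRingEnd ℂ) (α k) * Complex.exp (-(((phase d k qj : ℝ) : ℂ) * Complex.I))‖
      ≤ 2 * Real.pi * w * (|χ k| / Real.sqrt w) * (2 * ‖α k‖) := by
    have hn1 : (0:ℝ) ≤ 2 * Real.pi * |k i| * (|χ k| / Real.sqrt w) := by positivity
    have hn2 : (0:ℝ) ≤ |χ k| / Real.sqrt w := by positivity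
    calc 2 * Real.pi * |k i| * (|χ k| / Real.sqrt w) * ‖_ - _‖
        ≤ 2 * Real.pi * |k i| * (|χ k| / Real.sqrt w) * (2 * ‖α k‖) :=
          mul_le_mul_of_nonneg_left hAB hn1
      _ ≤ 2 * Real.pi * w * (|χ k| / Real.sqrt w) * (2 * ‖α k‖) := by
          nlinarith [mul_le_mul_of_nonneg_right hki
            (show (0:ℝ) ≤ 2 * Real.pi * (|χ k| / Real.sqrt w) * (2 * ‖α k‖) by positivity)]
  refine h1.trans ?_
  have hdiv : w / Real.sqrt w = Real.sqrt w := Real.div_sqrt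
  have hsq : Real.sqrt w = w ^ ((1:ℝ)/2) := Real.sqrt_eq_rpow w
  rw [← hsq]
  have : 2 * Real.pi * w * (|χ k| / Real.sqrt w) * (2 * ‖α k‖)
      = 4 * Real.pi * ((w / Real.sqrt w) * |χ k| * ‖α k‖) := by ring
  rw [this, hdiv]
end AuxJ
noncomputable section AuxMeas
open MeasureTheory ENNReal

variable {d : ℕ} {m σ : ℝ} {χ : EuclideanSpace ℝ (Fin d) → ℝ}
variable {α : EuclideanSpace ℝ (Fin d) → ℂ}

lemma continuous_omega_rpow (hm : 0 < m) (c : ℝ) :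
    Continuous (fun k : EuclideanSpace ℝ (Fin d) => omega d m k ^ c) :=
  continuous_omega.rpow_const (fun k => Or.inl (omega_pos hm k).ne')

lemma chi_aesm (hm : 0 < m)
    (hχ : AEStronglyMeasurable (fun k => omega d m k ^ ((3:ℝ)/2 - σ) * χ k) volume) :
    AEStronglyMeasurable χ volume := by
  have h := ((continuous_omega_rpow hm (-((3:ℝ)/2 - σ))).aestronglyMeasurable (μ := volume)).mul hχ
  refine h.congr (Filter.Eventually.of_forall fun k => ?_)
  show omega d m k ^ (-((3:ℝ)/2 - σ)) * (omega d m k ^ ((3:ℝ)/2 - σ) * χ k) = χ k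
  rw [← mul_assoc, ← Real.rpow_add (omega_pos hm k)]
  norm_num

lemma alpha_aesm (hm : 0 < m)
    (hα : AEStronglyMeasurable (fun k => ((omega d m k ^ σ : ℝ) : ℂ) * α k) volume) :
    AEStronglyMeasurable α volume := by
  have hc : Continuous (fun k : EuclideanSpace ℝ (Fin d) => ((omega d m k ^ (-σ) : ℝ) : ℂ)) :=
    Complex.continuous_ofReal.comp (continuous_omega_rpow hm (-σ))
  have h := (hc.aestronglyMeasurable (μ := volume)).mul hα
  refine h.congr (Filter.Eventually.of_forall fun k => ?_)
  show ((omega d m k ^ (-σ) : ℝ) : ℂ) * (((omega d m k ^ σ : ℝ) : ℂ) * α k) = α k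
  rw [← mul_assoc, ← Complex.ofReal_mul, ← Real.rpow_add (omega_pos hm k)]
  norm_num

lemma FF_memLp (hm : 0 < m)
    (hχ : MemLp (fun k => omega d m k ^ ((3:ℝ)/2 - σ) * χ k) 2 volume) :
    MemLp (FF d m σ χ) 2 volume := by
  have haesm : AEStronglyMeasurable (FF d m σ χ) volume :=
    ((continuous_omega_rpow hm ((1:ℝ)/2 - σ)).aestronglyMeasurable (μ := volume)).mul
      (chi_aesm hm hχ.1)
  refine MemLp.of_le_mul (c := max 1 (m ^ ((1:ℝ)/2 - σ - ((3:ℝ)/2 - σ)))) hχ haesm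
    (Filter.Eventually.of_forall fun k => ?_)
  have h0 := omega_pos hm (k := k)
  have hb := omega_rpow_le hm (show ((1:ℝ)/2 - σ) ≤ ((3:ℝ)/2 - σ) by norm_num) k
  rw [FF, Real.norm_eq_abs, Real.norm_eq_abs, abs_mul, abs_mul,
    abs_of_pos (Real.rpow_pos_of_pos h0 _), abs_of_pos (Real.rpow_pos_of_pos h0 _)]
  calc omega d m k ^ ((1:ℝ)/2 - σ) * |χ k|
      ≤ (max 1 (m ^ ((1:ℝ)/2 - σ - ((3:ℝ)/2 - σ))) * omega d m k ^ ((3:ℝ)/2 - σ)) * |χ k| :=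
        mul_le_mul_of_nonneg_right hb (abs_nonneg _)
    _ = max 1 (m ^ ((1:ℝ)/2 - σ - ((3:ℝ)/2 - σ))) * (omega d m k ^ ((3:ℝ)/2 - σ) * |χ k|) := by
        ring

lemma GG_memLp (hα : MemLp (fun k => ((omega d m k ^ σ : ℝ) : ℂ) * α k) 2 volume) :
    MemLp (GG d m σ α) 2 volume := hα.norm

lemma continuous_phase (qj : EuclideanSpace ℝ (Fin d)) :
    Continuous (fun k : EuclideanSpace ℝ (Fin d) => phase d k qj) := by
  unfold phase
  exact continuous_const.mul (continuous_finset_sum _ fun i _ =>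
    ((EuclideanSpace.proj i).continuous).mul continuous_const)

lemma continuous_phase' (k : EuclideanSpace ℝ (Fin d)) :
    Continuous (fun qj : EuclideanSpace ℝ (Fin d) => phase d k qj) := by
  unfold phase
  exact continuous_const.mul (continuous_finset_sum _ fun i _ =>
    continuous_const.mul ((EuclideanSpace.proj i).continuous))

lemma Jint_aesm (hm : 0 < m)
    (hχ : AEStronglyMeasurable (fun k => omega d m k ^ ((3:ℝ)/2 - σ) * χ k) volume)
    (hα : AEStronglyMeasurable (fun k => ((omega d m k ^ σ : ℝ) : ℂ) * α k) volume)
    (qj : EuclideanSpace ℝ (Fin d)) (i : Fin d) :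
    AEStronglyMeasurable (Jint d m χ qj α i) volume := by
  have hαm : AEStronglyMeasurable α volume := alpha_aesm hm hα
  have hki : Continuous (fun k : EuclideanSpace ℝ (Fin d) => ((k i : ℝ) : ℂ)) :=
    Complex.continuous_ofReal.comp (EuclideanSpace.proj i).continuous
  have hc : AEStronglyMeasurable
      (fun k : EuclideanSpace ℝ (Fin d) => ((χ k / Real.sqrt (omega d m k) : ℝ) : ℂ)) volume := by
    have h1 : AEStronglyMeasurable
        (fun k : EuclideanSpace ℝ (Fin d) => χ k * (Real.sqrt (omega d m k))⁻¹) volume :=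
      (chi_aesm hm hχ).mul
        ((continuous_omega.sqrt.inv₀
          (fun k => (Real.sqrt_pos.2 (omega_pos hm k)).ne')).aestronglyMeasurable (μ := volume))
    have : AEStronglyMeasurable
        (fun k : EuclideanSpace ℝ (Fin d) => χ k / Real.sqrt (omega d m k)) volume := by
      refine h1.congr (Filter.Eventually.of_forall fun k => ?_)
      simp [div_eq_mul_inv]
    exact Complex.continuous_ofReal.comp_aestronglyMeasurable this
  have hexp : Continuous
      (fun k : EuclideanSpace ℝ (Fin d) =>
        Complex.exp (((phase d k qj : ℝ) : ℂ) * Complex.I)) :=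
    Complex.continuous_exp.comp
      ((Complex.continuous_ofReal.comp (continuous_phase qj)).mul continuous_const)
  have hexp' : Continuous
      (fun k : EuclideanSpace ℝ (Fin d) =>
        Complex.exp (-(((phase d k qj : ℝ) : ℂ) * Complex.I))) :=
    Complex.continuous_exp.comp
      ((Complex.continuous_ofReal.comp (continuous_phase qj)).mul continuous_const).neg
  exact ((((aestronglyMeasurable_const.mul (hki.aestronglyMeasurable (μ := volume)))).mul
    hc).mul
    (((hαm.mul (hexp.aestronglyMeasurable (μ := volume)))).sub
      (((continuous_star.comp_aestronglyMeasurable hαm)).mul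
        (hexp'.aestronglyMeasurable (μ := volume)))))

lemma Jint_integrable (hm : 0 < m)
    (hχ : MemLp (fun k => omega d m k ^ ((3:ℝ)/2 - σ) * χ k) 2 volume)
    (hα : MemLp (fun k => ((omega d m k ^ σ : ℝ) : ℂ) * α k) 2 volume)
    (qj : EuclideanSpace ℝ (Fin d)) (i : Fin d) :
    Integrable (Jint d m χ qj α i) volume := by
  have hFG := cauchy_schwarz (FF_memLp hm hχ) (GG_memLp hα)
  refine Integrable.mono' ((hFG.1.abs).const_mul (4 * Real.pi)) (Jint_aesm hm hχ.1 hα.1 qj i)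
    (Filter.Eventually.of_forall fun k => ?_)
  exact J_norm_le hm qj α i k

end AuxMeas
noncomputable section AuxGradI
open MeasureTheory ENNReal Filter

variable {d : ℕ} {m σ : ℝ} {χ : EuclideanSpace ℝ (Fin d) → ℝ}
variable {α α' : EuclideanSpace ℝ (Fin d) → ℂ}

lemma memLp_scaled_sub (hα : MemLp (fun k => ((omega d m k ^ σ : ℝ) : ℂ) * α k) 2 volume)
    (hα' : MemLp (fun k => ((omega d m k ^ σ : ℝ) : ℂ) * α' k) 2 volume) :
    MemLp (fun k => ((omega d m k ^ σ : ℝ) : ℂ) * (α' k - α k)) 2 volume := by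
  refine (hα'.sub hα).ae_eq (Filter.Eventually.of_forall fun k => ?_)
  show ((omega d m k ^ σ : ℝ) : ℂ) * α' k - ((omega d m k ^ σ : ℝ) : ℂ) * α k = _
  ring

lemma gradI_diff_alpha (hm : 0 < m)
    (hχ : MemLp (fun k => omega d m k ^ ((3:ℝ)/2 - σ) * χ k) 2 volume)
    (hα : MemLp (fun k => ((omega d m k ^ σ : ℝ) : ℂ) * α k) 2 volume)
    (hα' : MemLp (fun k => ((omega d m k ^ σ : ℝ) : ℂ) * α' k) 2 volume)
    (qj : EuclideanSpace ℝ (Fin d)) (i : Fin d) :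
    ‖gradI d m χ qj α' i - gradI d m χ qj α i‖ ≤
      4 * Real.pi * ((eLpNorm (FF d m σ χ) 2 volume).toReal *
        (eLpNorm (fun k => ((omega d m k ^ σ : ℝ) : ℂ) * (α' k - α k)) 2 volume).toReal) := by
  have hβ := memLp_scaled_sub hα hα'
  have hlin : ∀ k, Jint d m χ qj α' i k - Jint d m χ qj α i k =
      Jint d m χ qj (fun k => α' k - α k) i k := by
    intro k
    unfold Jint
    rw [map_sub]
    ring
  have h1 : gradI d m χ qj α' i - gradI d m χ qj α i =
      ∫ k, Jint d m χ qj (fun k' => α' k' - α k') i k := by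
    rw [gradI_eq_Jint, gradI_eq_Jint,
      ← integral_sub (Jint_integrable hm hχ hα' qj i) (Jint_integrable hm hχ hα qj i)]
    exact integral_congr_ae (Filter.Eventually.of_forall hlin)
  rw [h1]
  have hFG := cauchy_schwarz (FF_memLp hm hχ) (GG_memLp hβ)
  calc ‖∫ k, Jint d m χ qj (fun k' => α' k' - α k') i k‖
      ≤ ∫ k, ‖Jint d m χ qj (fun k' => α' k' - α k') i k‖ := norm_integral_le_integral_norm _
    _ ≤ ∫ k, 4 * Real.pi * |FF d m σ χ k * GG d m σ (fun k' => α' k' - α k') k| := by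
        refine integral_mono_of_nonneg (Filter.Eventually.of_forall fun k => norm_nonneg _)
          ((hFG.1.abs).const_mul (4 * Real.pi))
          (Filter.Eventually.of_forall fun k => J_norm_le hm qj _ i k)
    _ = 4 * Real.pi * ∫ k, |FF d m σ χ k * GG d m σ (fun k' => α' k' - α k') k| :=
        integral_const_mul _ _
    _ ≤ 4 * Real.pi * ((eLpNorm (FF d m σ χ) 2 volume).toReal *
        (eLpNorm (GG d m σ (fun k' => α' k' - α k')) 2 volume).toReal) := by
        have := hFG.2
        nlinarith [Real.pi_pos]
    _ = _ := by
        rw [show eLpNorm (GG d m σ (fun k' => α' k' - α k')) 2 volume =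
          eLpNorm (fun k => ((omega d m k ^ σ : ℝ) : ℂ) * (α' k - α k)) 2 volume from
          eLpNorm_norm _]

lemma gradI_tendsto_q (hm : 0 < m)
    (hχ : MemLp (fun k => omega d m k ^ ((3:ℝ)/2 - σ) * χ k) 2 volume)
    (hα : MemLp (fun k => ((omega d m k ^ σ : ℝ) : ℂ) * α k) 2 volume)
    {qs : ℕ → EuclideanSpace ℝ (Fin d)} {q : EuclideanSpace ℝ (Fin d)}
    (hq : Tendsto qs atTop (nhds q)) (i : Fin d) :
    Tendsto (fun ℓ => gradI d m χ (qs ℓ) α i) atTop (nhds (gradI d m χ q α i)) := by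
  simp only [gradI_eq_Jint]
  have hFG := cauchy_schwarz (FF_memLp hm hχ) (GG_memLp hα)
  refine tendsto_integral_of_dominated_convergence
    (fun k => 4 * Real.pi * |FF d m σ χ k * GG d m σ α k|)
    (fun ℓ => Jint_aesm hm hχ.1 hα.1 (qs ℓ) i)
    ((hFG.1.abs).const_mul (4 * Real.pi))
    (fun ℓ => Filter.Eventually.of_forall fun k => J_norm_le hm (qs ℓ) α i k)
    (Filter.Eventually.of_forall fun k => ?_)
  have hcont : Continuous (fun qj => Jint d m χ qj α i k) := by
    unfold Jint
    have he1 : Continuous (fun qj : EuclideanSpace ℝ (Fin d) =>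
        Complex.exp (((phase d k qj : ℝ) : ℂ) * Complex.I)) :=
      Complex.continuous_exp.comp
        ((Complex.continuous_ofReal.comp (continuous_phase' k)).mul continuous_const)
    have he2 : Continuous (fun qj : EuclideanSpace ℝ (Fin d) =>
        Complex.exp (-(((phase d k qj : ℝ) : ℂ) * Complex.I))) :=
      Complex.continuous_exp.comp
        ((Complex.continuous_ofReal.comp (continuous_phase' k)).mul continuous_const).neg
    exact continuous_const.mul
      ((continuous_const.mul he1).sub (continuous_const.mul he2))
  exact (hcont.tendsto q).comp hq

end AuxGradI
noncomputable section AuxGrad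
open MeasureTheory Filter

lemma continuous_gradient {E : Type*} [NormedAddCommGroup E] [InnerProductSpace ℝ E]
    [CompleteSpace E] {g : E → ℝ} (hg : ContDiff ℝ 1 g) : Continuous (gradient g) := by
  have h1 : Continuous (fun x => fderiv ℝ g x) := hg.continuous_fderiv one_ne_zero
  exact (InnerProductSpace.toDual ℝ E).symm.continuous.comp h1

lemma contDiff_sqrt_normsq {E : Type*} [NormedAddCommGroup E] [InnerProductSpace ℝ E]
    {M : ℝ} (hM : 0 < M) :
    ContDiff ℝ 1 (fun p : E => Real.sqrt (‖p‖ ^ 2 + M ^ 2)) := by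
  rw [contDiff_iff_contDiffAt]
  intro p
  have hne : ‖p‖ ^ 2 + M ^ 2 ≠ 0 := by positivity
  exact (Real.contDiffAt_sqrt hne).comp p
    (((contDiff_norm_sq ℝ).add contDiff_const).contDiffAt)

lemma contDiff_normsq_div {E : Type*} [NormedAddCommGroup E] [InnerProductSpace ℝ E]
    (M : ℝ) : ContDiff ℝ 1 (fun p : E => ‖p‖ ^ 2 / (2 * M)) :=
  (contDiff_norm_sq ℝ).div_const _

end AuxGrad
noncomputable section AuxC
open MeasureTheory ENNReal Filter

variable {d n : ℕ} {m σ : ℝ} {χ : EuclideanSpace ℝ (Fin d) → ℝ}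

lemma continuous_qblock (j : Fin n) :
    Continuous (fun q : EuclideanSpace ℝ (Fin n × Fin d) => qblock d n q j) := by
  have h : Continuous (fun q : EuclideanSpace ℝ (Fin n × Fin d) =>
      (WithLp.equiv 2 (∀ _ : Fin d, ℝ)).symm (fun i => q (j, i))) :=
    (PiLp.continuous_toLp _ _).comp
      (continuous_pi fun i => (EuclideanSpace.proj (j, i)).continuous)
  exact h

/-- The α-component of NL as a function of q (for fixed k), times ω^σ. -/
def Halpha (d n : ℕ) (m σ : ℝ) (χ : EuclideanSpace ℝ (Fin d) → ℝ)
    (k : EuclideanSpace ℝ (Fin d)) (q : EuclideanSpace ℝ (Fin n × Fin d)) : ℂ :=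
  ((omega d m k ^ σ : ℝ) : ℂ) * (-Complex.I * ∑ j : Fin n,
    ((χ k / Real.sqrt (omega d m k) : ℝ) : ℂ) *
      Complex.exp (-(((phase d k (qblock d n q j) : ℝ) : ℂ) * Complex.I)))

lemma continuous_Halpha (k : EuclideanSpace ℝ (Fin d)) :
    Continuous (Halpha d n m σ χ k) := by
  unfold Halpha
  refine continuous_const.mul (continuous_const.mul (continuous_finset_sum _ fun j _ => ?_))
  refine continuous_const.mul (Complex.continuous_exp.comp ?_)
  exact ((Complex.continuous_ofReal.comp
    ((continuous_phase' k).comp (continuous_qblock j))).mul continuous_const).neg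

lemma Halpha_norm_le (hm : 0 < m) (hσ1 : σ ≤ 1) (k : EuclideanSpace ℝ (Fin d))
    (q : EuclideanSpace ℝ (Fin n × Fin d)) :
    ‖Halpha d n m σ χ k q‖ ≤
      n * max 1 (m ^ (σ - 1/2 - ((3:ℝ)/2 - σ))) *
        ‖omega d m k ^ ((3:ℝ)/2 - σ) * χ k‖ := by
  have h0 := omega_pos hm (k := k)
  have hsp : 0 < Real.sqrt (omega d m k) := Real.sqrt_pos.2 h0
  have hsum : ‖-Complex.I * ∑ j : Fin n,
      ((χ k / Real.sqrt (omega d m k) : ℝ) : ℂ) *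
        Complex.exp (-(((phase d k (qblock d n q j) : ℝ) : ℂ) * Complex.I))‖
      ≤ n * (|χ k| / Real.sqrt (omega d m k)) := by
    rw [norm_mul, norm_neg, Complex.norm_I, one_mul]
    refine (norm_sum_le _ _).trans ?_
    have : ∀ j : Fin n, ‖((χ k / Real.sqrt (omega d m k) : ℝ) : ℂ) *
        Complex.exp (-(((phase d k (qblock d n q j) : ℝ) : ℂ) * Complex.I))‖ =
        |χ k| / Real.sqrt (omega d m k) := by
      intro j
      rw [norm_mul, exp_phase_norm', mul_one, Complex.norm_real, Real.norm_eq_abs, abs_div,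
        abs_of_pos hsp]
    rw [Finset.sum_congr rfl (fun j _ => this j)]
    simp
  have h1 : ‖Halpha d n m σ χ k q‖ ≤
      omega d m k ^ σ * (n * (|χ k| / Real.sqrt (omega d m k))) := by
    rw [Halpha, norm_mul, Complex.norm_real, Real.norm_eq_abs,
      abs_of_pos (Real.rpow_pos_of_pos h0 _)]
    exact mul_le_mul_of_nonneg_left hsum (Real.rpow_pos_of_pos h0 _).le
  refine h1.trans ?_
  have hsq : Real.sqrt (omega d m k) = omega d m k ^ ((1:ℝ)/2) := Real.sqrt_eq_rpow _
  have heq : omega d m k ^ σ * (n * (|χ k| / Real.sqrt (omega d m k)))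
      = n * (omega d m k ^ (σ - 1/2) * |χ k|) := by
    rw [hsq, div_eq_mul_inv, ← Real.rpow_neg h0.le,
      show omega d m k ^ σ * (↑n * (|χ k| * omega d m k ^ (-((1:ℝ)/2))))
        = ↑n * ((omega d m k ^ σ * omega d m k ^ (-((1:ℝ)/2))) * |χ k|) by ring,
      ← Real.rpow_add h0, show σ + -((1:ℝ)/2) = σ - 1/2 by ring]
  rw [heq]
  have hb := omega_rpow_le hm (show σ - 1/2 ≤ ((3:ℝ)/2 - σ) by linarith) k
  rw [Real.norm_eq_abs, abs_mul, abs_of_pos (Real.rpow_pos_of_pos h0 _)]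
  calc (n : ℝ) * (omega d m k ^ (σ - 1/2) * |χ k|)
      ≤ n * ((max 1 (m ^ (σ - 1/2 - ((3:ℝ)/2 - σ))) * omega d m k ^ ((3:ℝ)/2 - σ)) * |χ k|) := by
        refine mul_le_mul_of_nonneg_left (mul_le_mul_of_nonneg_right hb (abs_nonneg _))
          (Nat.cast_nonneg n)
    _ = n * max 1 (m ^ (σ - 1/2 - ((3:ℝ)/2 - σ))) * (omega d m k ^ ((3:ℝ)/2 - σ) * |χ k|) := by
        ring

lemma Halpha_aesm (hm : 0 < m)
    (hχ : AEStronglyMeasurable (fun k => omega d m k ^ ((3:ℝ)/2 - σ) * χ k) volume)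
    (q : EuclideanSpace ℝ (Fin n × Fin d)) :
    AEStronglyMeasurable (fun k => Halpha d n m σ χ k q) volume := by
  unfold Halpha
  have hcm : AEStronglyMeasurable
      (fun k : EuclideanSpace ℝ (Fin d) => ((χ k / Real.sqrt (omega d m k) : ℝ) : ℂ)) volume := by
    have h1 : AEStronglyMeasurable
        (fun k : EuclideanSpace ℝ (Fin d) => χ k * (Real.sqrt (omega d m k))⁻¹) volume :=
      (chi_aesm hm hχ).mul
        ((continuous_omega.sqrt.inv₀
          (fun k => (Real.sqrt_pos.2 (omega_pos hm k)).ne')).aestronglyMeasurable (μ := volume))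
    have h2 : AEStronglyMeasurable
        (fun k : EuclideanSpace ℝ (Fin d) => χ k / Real.sqrt (omega d m k)) volume := by
      refine h1.congr (Filter.Eventually.of_forall fun k => ?_)
      simp [div_eq_mul_inv]
    exact Complex.continuous_ofReal.comp_aestronglyMeasurable h2
  refine AEStronglyMeasurable.mul ?_ ?_
  · exact (Complex.continuous_ofReal.comp
      (continuous_omega_rpow hm σ)).aestronglyMeasurable
  refine aestronglyMeasurable_const.mul (Finset.aestronglyMeasurable_fun_sum _ fun j _ => ?_)
  refine hcm.mul ?_
  exact (Complex.continuous_exp.comp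
    (((Complex.continuous_ofReal.comp (continuous_phase (qblock d n q j)))).mul
      continuous_const).neg).aestronglyMeasurable

lemma C_tendsto (hm : 0 < m) (hσ1 : σ ≤ 1)
    (hχ : MemLp (fun k => omega d m k ^ ((3:ℝ)/2 - σ) * χ k) 2 volume)
    {qs : ℕ → EuclideanSpace ℝ (Fin n × Fin d)} {q : EuclideanSpace ℝ (Fin n × Fin d)}
    (hq : Tendsto qs atTop (nhds q)) :
    Tendsto (fun ℓ => (eLpNorm
      (fun k => Halpha d n m σ χ k (qs ℓ) - Halpha d n m σ χ k q) 2 volume).toReal)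
      atTop (nhds 0) := by
  set c0 : ℝ := 2 * (n * max 1 (m ^ (σ - 1/2 - ((3:ℝ)/2 - σ)))) with hc0
  have hc0nn : 0 ≤ c0 := by positivity
  set Φ : EuclideanSpace ℝ (Fin d) → ℝ := fun k => omega d m k ^ ((3:ℝ)/2 - σ) * χ k with hΦ
  have hbound_pt : ∀ ℓ k, ‖Halpha d n m σ χ k (qs ℓ) - Halpha d n m σ χ k q‖ ≤ ‖c0 * Φ k‖ := by
    intro ℓ k
    refine (norm_sub_le _ _).trans ?_
    have h1 := Halpha_norm_le (χ := χ) hm hσ1 k (qs ℓ)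
    have h2 := Halpha_norm_le (χ := χ) hm hσ1 k q
    rw [norm_mul, Real.norm_eq_abs (c0), abs_of_nonneg hc0nn, hc0]
    have : (0:ℝ) ≤ ‖Φ k‖ := norm_nonneg _
    nlinarith
  -- lintegral of squares tends to zero
  have hglim : ∀ k, Tendsto
      (fun ℓ => ((‖Halpha d n m σ χ k (qs ℓ) - Halpha d n m σ χ k q‖₊ : ℝ≥0∞)) ^ (2:ℕ))
      atTop (nhds 0) := by
    intro k
    have h1 : Tendsto (fun ℓ => Halpha d n m σ χ k (qs ℓ) - Halpha d n m σ χ k q) atTop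
        (nhds 0) := by
      have hH := ((continuous_Halpha (m := m) (σ := σ) (χ := χ) k).tendsto q).comp hq
      have h1' : Tendsto (fun ℓ => Halpha d n m σ χ k (qs ℓ) - Halpha d n m σ χ k q) atTop
          (nhds (Halpha d n m σ χ k q - Halpha d n m σ χ k q)) :=
        Filter.Tendsto.sub hH tendsto_const_nhds
      rw [sub_self] at h1'
      exact h1'
    have h2 : Continuous (fun z : ℂ => ((‖z‖₊ : ℝ≥0∞)) ^ (2:ℕ)) :=
      (ENNReal.continuous_pow 2).comp (ENNReal.continuous_coe.comp continuous_nnnorm)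
    have := (h2.tendsto 0).comp h1
    simpa [Function.comp_def] using this
  have hmeas : ∀ ℓ, AEMeasurable
      (fun k => ((‖Halpha d n m σ χ k (qs ℓ) - Halpha d n m σ χ k q‖₊ : ℝ≥0∞)) ^ (2:ℕ))
      volume := by
    intro ℓ
    exact (((Halpha_aesm hm hχ.1 (qs ℓ)).sub (Halpha_aesm hm hχ.1 q)).enorm).pow_const 2
  have hΦmem : MemLp (fun k => c0 * Φ k) 2 volume := hχ.const_mul c0
  have hbddint : ∫⁻ k, ((‖c0 * Φ k‖₊ : ℝ≥0∞)) ^ (2:ℕ) ≠ ⊤ := by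
    have := lintegral_sq_lt_top hΦmem
    rw [show (fun k => ((‖c0 * Φ k‖₊ : ℝ≥0∞)) ^ (2:ℕ)) =
        (fun k => ((‖c0 * Φ k‖₊ : ℝ≥0∞)) ^ ((2:ℕ):ℝ)) from funext fun k =>
          (ENNReal.rpow_natCast _ 2).symm]
    push_cast
    exact this.ne
  have hL : Tendsto (fun ℓ => ∫⁻ k,
      ((‖Halpha d n m σ χ k (qs ℓ) - Halpha d n m σ χ k q‖₊ : ℝ≥0∞)) ^ (2:ℕ)) atTop
      (nhds 0) := by
    have h0int : (0:ℝ≥0∞) = ∫⁻ (_ : EuclideanSpace ℝ (Fin d)), 0 := by simp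
    rw [h0int]
    refine tendsto_lintegral_of_dominated_convergence'
      (fun k => ((‖c0 * Φ k‖₊ : ℝ≥0∞)) ^ (2:ℕ)) hmeas ?_ hbddint ?_
    · intro ℓ
      refine Filter.Eventually.of_forall fun k => ?_
      have := hbound_pt ℓ k
      have hnn : ‖Halpha d n m σ χ k (qs ℓ) - Halpha d n m σ χ k q‖₊ ≤ ‖c0 * Φ k‖₊ := by
        rw [← NNReal.coe_le_coe, coe_nnnorm, coe_nnnorm]
        exact this
      exact pow_le_pow_left' (ENNReal.coe_le_coe.2 hnn) 2
    · exact Filter.Eventually.of_forall fun k => hglim k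
  -- convert to eLpNorm
  have heq : ∀ ℓ, (eLpNorm
      (fun k => Halpha d n m σ χ k (qs ℓ) - Halpha d n m σ χ k q) 2 volume).toReal
      = ((∫⁻ k, ((‖Halpha d n m σ χ k (qs ℓ) - Halpha d n m σ χ k q‖₊ : ℝ≥0∞)) ^ (2:ℕ))).toReal
        ^ ((1:ℝ)/2) := by
    intro ℓ
    rw [eLpNorm_eq_lintegral_rpow_enorm_toReal two_ne_zero ENNReal.ofNat_ne_top]
    simp only [enorm_eq_nnnorm]
    rw [← ENNReal.toReal_rpow]
    norm_num
  have hLreal : Tendsto (fun ℓ => ((∫⁻ k,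
      ((‖Halpha d n m σ χ k (qs ℓ) - Halpha d n m σ χ k q‖₊ : ℝ≥0∞)) ^ (2:ℕ))).toReal)
      atTop (nhds 0) := by
    rw [show (0:ℝ) = (0:ℝ≥0∞).toReal by simp]
    exact (ENNReal.tendsto_toReal ENNReal.zero_ne_top).comp hL
  have hfinal := hLreal.rpow_const (p := (1:ℝ)/2) (Or.inr (by norm_num))
  rw [show (0:ℝ) ^ ((1:ℝ)/2) = 0 from Real.zero_rpow (by norm_num)] at hfinal
  refine Tendsto.congr (fun ℓ => ?_) hfinal
  exact (heq ℓ).symm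

end AuxC
noncomputable section AuxMain
open MeasureTheory Filter

lemma norm_tendsto_of_sq_le {x S : ℕ → ℝ} (hx : ∀ ℓ, 0 ≤ x ℓ) (h : ∀ ℓ, x ℓ ^ 2 ≤ S ℓ)
    (hS : Tendsto S atTop (nhds 0)) : Tendsto x atTop (nhds 0) := by
  have h2 : Tendsto (fun ℓ => x ℓ ^ 2) atTop (nhds 0) :=
    squeeze_zero (fun ℓ => sq_nonneg _) h hS
  have h3 := (Real.continuous_sqrt.tendsto 0).comp h2
  rw [Real.sqrt_zero] at h3
  refine h3.congr fun ℓ => ?_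
  exact Real.sqrt_sq (hx ℓ)

lemma euclid_tendsto_of_components {ι : Type*} [Fintype ι] {x : ℕ → EuclideanSpace ℝ ι}
    {y : EuclideanSpace ℝ ι} (h : ∀ i, Tendsto (fun ℓ => x ℓ i) atTop (nhds (y i))) :
    Tendsto x atTop (nhds y) := by
  have h1 : Tendsto (fun ℓ => (WithLp.equiv 2 (∀ _ : ι, ℝ)) (x ℓ)) atTop
      (nhds ((WithLp.equiv 2 (∀ _ : ι, ℝ)) y)) := tendsto_pi_nhds.2 h
  have h2 := ((PiLp.continuous_toLp 2 (fun _ : ι => ℝ)).tendsto _).comp h1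
  simpa [Function.comp_def] using h2

lemma sq_norm_sub_tendsto {E : Type*} [NormedAddCommGroup E] {x : ℕ → E} {y : E}
    (h : Tendsto x atTop (nhds y)) :
    Tendsto (fun ℓ => ‖x ℓ - y‖ ^ 2) atTop (nhds 0) := by
  have h1 : Tendsto (fun ℓ => ‖x ℓ - y‖) atTop (nhds 0) :=
    tendsto_iff_norm_sub_tendsto_zero.1 h
  have := h1.pow 2
  simpa using this

end AuxMain
noncomputable section

open Filter

/-- Under V ∈ C²_b and ω^{3/2−σ}χ ∈ L², σ ∈ [1/2,1], the nonlinearity 𝒩 : X^σ → X^σ is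
continuous: if u_ℓ → u in X^σ then 𝒩(u_ℓ) → 𝒩(u) in X^σ. -/
theorem NL_continuous (d n : ℕ) (m σ : ℝ) (hm : 0 < m)
    (hσ : σ ∈ Set.Icc (1 / 2 : ℝ) 1)
    (χ : EuclideanSpace ℝ (Fin d) → ℝ)
    (hχ : MemLp (fun k => omega d m k ^ ((3 : ℝ) / 2 - σ) * χ k) 2 volume)
    (V : EuclideanSpace ℝ (Fin n × Fin d) → ℝ)
    (hV : ContDiff ℝ 2 V)
    (hV1 : ∃ C, ∀ q, ‖gradient V q‖ ≤ C)
    (hV2 : ∃ C, ∀ q, ‖fderiv ℝ (fderiv ℝ V) q‖ ≤ C)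
    (M : Fin n → ℝ) (hM : ∀ j, 0 < M j)
    (f : Fin n → EuclideanSpace ℝ (Fin d) → ℝ)
    (hf : (∀ j p, f j p = Real.sqrt (‖p‖ ^ 2 + M j ^ 2)) ∨
          (∀ j p, f j p = ‖p‖ ^ 2 / (2 * M j)))
    (u : ℕ → PhaseSpace d n) (u₀ : PhaseSpace d n)
    (hu : ∀ ℓ, MemLp (fun k => ((omega d m k ^ σ : ℝ) : ℂ) * (u ℓ).2.2 k) 2 volume)
    (hu₀ : MemLp (fun k => ((omega d m k ^ σ : ℝ) : ℂ) * u₀.2.2 k) 2 volume)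
    (hconv : Tendsto (fun ℓ => normX d n σ m (u ℓ - u₀)) atTop (nhds 0)) :
    Tendsto (fun ℓ => normX d n σ m (NL d n m χ V f (u ℓ) - NL d n m χ V f u₀)) atTop
      (nhds 0) := by
  obtain ⟨hσl, hσu⟩ := hσ
  -- Step 1: extract componentwise convergence from hconv
  set S : ℕ → ℝ := fun ℓ => (∑ j, ‖(u ℓ - u₀).1 j‖ ^ 2) + ‖(u ℓ - u₀).2.1‖ ^ 2 +
    ((eLpNorm (fun k => ((omega d m k ^ σ : ℝ) : ℂ) * (u ℓ - u₀).2.2 k) 2 volume).toReal) ^ 2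
    with hSdef
  have hS_nonneg : ∀ ℓ, 0 ≤ S ℓ := by
    intro ℓ
    have h1 : (0:ℝ) ≤ ∑ j, ‖(u ℓ - u₀).1 j‖ ^ 2 := Finset.sum_nonneg fun _ _ => sq_nonneg _
    have h2 := sq_nonneg ‖(u ℓ - u₀).2.1‖
    have h3 := sq_nonneg ((eLpNorm (fun k => ((omega d m k ^ σ : ℝ) : ℂ) *
      (u ℓ - u₀).2.2 k) 2 volume).toReal)
    rw [hSdef]
    dsimp only
    linarith
  have hSt : Tendsto S atTop (nhds 0) := by
    have h1 : Tendsto (fun ℓ => normX d n σ m (u ℓ - u₀) * normX d n σ m (u ℓ - u₀)) atTop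
        (nhds 0) := by simpa using hconv.mul hconv
    refine h1.congr fun ℓ => ?_
    rw [normX]
    exact Real.mul_self_sqrt (hS_nonneg ℓ)
  have hp : ∀ j, Tendsto (fun ℓ => (u ℓ).1 j) atTop (nhds (u₀.1 j)) := by
    intro j
    rw [tendsto_iff_norm_sub_tendsto_zero]
    refine norm_tendsto_of_sq_le (fun ℓ => norm_nonneg _) (fun ℓ => ?_) hSt
    have h1 : ‖(u ℓ).1 j - u₀.1 j‖ ^ 2 ≤ ∑ j', ‖(u ℓ - u₀).1 j'‖ ^ 2 := by
      have he : ‖(u ℓ).1 j - u₀.1 j‖ ^ 2 = ‖(u ℓ - u₀).1 j‖ ^ 2 := rfl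
      rw [he]
      exact Finset.single_le_sum (f := fun j' => ‖(u ℓ - u₀).1 j'‖ ^ 2)
        (fun _ _ => sq_nonneg _) (Finset.mem_univ j)
    have h2 := sq_nonneg ‖(u ℓ - u₀).2.1‖
    have h3 := sq_nonneg ((eLpNorm (fun k => ((omega d m k ^ σ : ℝ) : ℂ) *
      (u ℓ - u₀).2.2 k) 2 volume).toReal)
    have hS_eq : S ℓ = (∑ j', ‖(u ℓ - u₀).1 j'‖ ^ 2) + ‖(u ℓ - u₀).2.1‖ ^ 2 +
      ((eLpNorm (fun k => ((omega d m k ^ σ : ℝ) : ℂ) * (u ℓ - u₀).2.2 k) 2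
        volume).toReal) ^ 2 := rfl
    rw [hS_eq]
    linarith
  have hq : Tendsto (fun ℓ => (u ℓ).2.1) atTop (nhds u₀.2.1) := by
    rw [tendsto_iff_norm_sub_tendsto_zero]
    refine norm_tendsto_of_sq_le (fun ℓ => norm_nonneg _) (fun ℓ => ?_) hSt
    have h1 : (0:ℝ) ≤ ∑ j', ‖(u ℓ - u₀).1 j'‖ ^ 2 := Finset.sum_nonneg fun _ _ => sq_nonneg _
    have h3 := sq_nonneg ((eLpNorm (fun k => ((omega d m k ^ σ : ℝ) : ℂ) *
      (u ℓ - u₀).2.2 k) 2 volume).toReal)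
    have he : ‖(u ℓ).2.1 - u₀.2.1‖ ^ 2 = ‖(u ℓ - u₀).2.1‖ ^ 2 := rfl
    have hS_eq : S ℓ = (∑ j', ‖(u ℓ - u₀).1 j'‖ ^ 2) + ‖(u ℓ - u₀).2.1‖ ^ 2 +
      ((eLpNorm (fun k => ((omega d m k ^ σ : ℝ) : ℂ) * (u ℓ - u₀).2.2 k) 2
        volume).toReal) ^ 2 := rfl
    rw [hS_eq, he]
    linarith
  have hE : Tendsto (fun ℓ => (eLpNorm (fun k => ((omega d m k ^ σ : ℝ) : ℂ) *
      ((u ℓ).2.2 k - u₀.2.2 k)) 2 volume).toReal) atTop (nhds 0) := by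
    refine norm_tendsto_of_sq_le (fun ℓ => ENNReal.toReal_nonneg) (fun ℓ => ?_) hSt
    have h1 : (0:ℝ) ≤ ∑ j', ‖(u ℓ - u₀).1 j'‖ ^ 2 := Finset.sum_nonneg fun _ _ => sq_nonneg _
    have h2 := sq_nonneg ‖(u ℓ - u₀).2.1‖
    have he : (eLpNorm (fun k => ((omega d m k ^ σ : ℝ) : ℂ) *
        ((u ℓ).2.2 k - u₀.2.2 k)) 2 volume).toReal ^ 2
        = (eLpNorm (fun k => ((omega d m k ^ σ : ℝ) : ℂ) * (u ℓ - u₀).2.2 k) 2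
          volume).toReal ^ 2 := rfl
    have hS_eq : S ℓ = (∑ j', ‖(u ℓ - u₀).1 j'‖ ^ 2) + ‖(u ℓ - u₀).2.1‖ ^ 2 +
      ((eLpNorm (fun k => ((omega d m k ^ σ : ℝ) : ℂ) * (u ℓ - u₀).2.2 k) 2
        volume).toReal) ^ 2 := rfl
    rw [hS_eq, he]
    linarith
  -- Step 2: the three components of the image converge
  have hV1' : ContDiff ℝ 1 V := hV.of_le (by norm_num)
  have hgradV : Tendsto (fun ℓ => gradient V ((u ℓ).2.1)) atTop (nhds (gradient V u₀.2.1)) :=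
    ((continuous_gradient hV1').tendsto _).comp hq
  have hqb : ∀ j : Fin n, Tendsto (fun ℓ => qblock d n ((u ℓ).2.1) j) atTop
      (nhds (qblock d n u₀.2.1 j)) :=
    fun j => ((continuous_qblock j).tendsto _).comp hq
  have hgradI : ∀ (j : Fin n) (i : Fin d),
      Tendsto (fun ℓ => gradI d m χ (qblock d n ((u ℓ).2.1) j) ((u ℓ).2.2) i)
        atTop (nhds (gradI d m χ (qblock d n u₀.2.1 j) (u₀.2.2) i)) := by
    intro j i
    have hw : Tendsto (fun ℓ => gradI d m χ (qblock d n ((u ℓ).2.1) j) (u₀.2.2) i) atTop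
        (nhds (gradI d m χ (qblock d n u₀.2.1 j) (u₀.2.2) i)) :=
      gradI_tendsto_q hm hχ hu₀ (hqb j) i
    have hdiff : Tendsto (fun ℓ => gradI d m χ (qblock d n ((u ℓ).2.1) j) ((u ℓ).2.2) i -
        gradI d m χ (qblock d n ((u ℓ).2.1) j) (u₀.2.2) i) atTop (nhds 0) := by
      rw [tendsto_zero_iff_norm_tendsto_zero]
      refine squeeze_zero (fun ℓ => norm_nonneg _)
        (fun ℓ => gradI_diff_alpha hm hχ hu₀ (hu ℓ) _ i) ?_
      have h4 := hE.const_mul (4 * Real.pi * (eLpNorm (FF d m σ χ) 2 volume).toReal)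
      rw [mul_zero] at h4
      refine h4.congr fun ℓ => ?_
      ring
    have h5 := hdiff.add hw
    rw [zero_add] at h5
    refine h5.congr fun ℓ => ?_
    ring
  have hcompA : ∀ j : Fin n, Tendsto (fun ℓ => (NL d n m χ V f (u ℓ)).1 j) atTop
      (nhds ((NL d n m χ V f u₀).1 j)) := by
    intro j
    refine euclid_tendsto_of_components fun i => ?_
    show Tendsto (fun ℓ => -(gradient V ((u ℓ).2.1) (j, i)) -
        (gradI d m χ (qblock d n ((u ℓ).2.1) j) ((u ℓ).2.2) i).re) atTop
      (nhds (-(gradient V u₀.2.1 (j, i)) - (gradI d m χ (qblock d n u₀.2.1 j) u₀.2.2 i).re))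
    refine Tendsto.sub (Tendsto.neg ?_) ?_
    · exact ((EuclideanSpace.proj ((j, i) : Fin n × Fin d)).continuous.tendsto _).comp hgradV
    · exact (Complex.continuous_re.tendsto _).comp (hgradI j i)
  have hA : Tendsto (fun ℓ => ∑ j, ‖(NL d n m χ V f (u ℓ) - NL d n m χ V f u₀).1 j‖ ^ 2)
      atTop (nhds 0) := by
    have hsum := tendsto_finset_sum (Finset.univ : Finset (Fin n))
      (fun j _ => sq_norm_sub_tendsto (hcompA j))
    rw [Finset.sum_const_zero] at hsum
    exact hsum.congr fun ℓ => Finset.sum_congr rfl fun j _ => rfl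
  -- q-component
  have hf1 : ∀ j, ContDiff ℝ 1 (f j) := by
    rcases hf with hf | hf
    · intro j
      rw [show f j = fun p => Real.sqrt (‖p‖ ^ 2 + M j ^ 2) from funext (hf j)]
      exact contDiff_sqrt_normsq (hM j)
    · intro j
      rw [show f j = fun p => ‖p‖ ^ 2 / (2 * M j) from funext (hf j)]
      exact contDiff_normsq_div _
  have hcompB : Tendsto (fun ℓ => (NL d n m χ V f (u ℓ)).2.1) atTop
      (nhds ((NL d n m χ V f u₀).2.1)) := by
    refine euclid_tendsto_of_components fun ji => ?_
    show Tendsto (fun ℓ => gradient (f ji.1) ((u ℓ).1 ji.1) ji.2) atTop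
      (nhds (gradient (f ji.1) (u₀.1 ji.1) ji.2))
    exact ((EuclideanSpace.proj ji.2).continuous.tendsto _).comp
      (((continuous_gradient (hf1 ji.1)).tendsto _).comp (hp ji.1))
  have hB : Tendsto (fun ℓ => ‖(NL d n m χ V f (u ℓ) - NL d n m χ V f u₀).2.1‖ ^ 2)
      atTop (nhds 0) := (sq_norm_sub_tendsto hcompB).congr fun ℓ => rfl
  -- α-component
  have hCH := C_tendsto (n := n) (χ := χ) hm hσu hχ hq
  have hfunC : ∀ ℓ, (fun k => ((omega d m k ^ σ : ℝ) : ℂ) *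
      (NL d n m χ V f (u ℓ) - NL d n m χ V f u₀).2.2 k)
      = fun k => Halpha d n m σ χ k ((u ℓ).2.1) - Halpha d n m σ χ k u₀.2.1 := by
    intro ℓ
    funext k
    show ((omega d m k ^ σ : ℝ) : ℂ) *
      ((NL d n m χ V f (u ℓ)).2.2 k - (NL d n m χ V f u₀).2.2 k) = _
    rw [mul_sub]
    rfl
  have hC : Tendsto (fun ℓ => ((eLpNorm (fun k => ((omega d m k ^ σ : ℝ) : ℂ) *
      (NL d n m χ V f (u ℓ) - NL d n m χ V f u₀).2.2 k) 2 volume).toReal) ^ 2)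
      atTop (nhds 0) := by
    have h2 : Tendsto (fun ℓ => ((eLpNorm (fun k => Halpha d n m σ χ k ((u ℓ).2.1) -
        Halpha d n m σ χ k u₀.2.1) 2 volume).toReal) ^ 2) atTop (nhds 0) := by
      simpa using hCH.pow 2
    refine h2.congr fun ℓ => ?_
    rw [hfunC ℓ]
  -- combine
  have hT : Tendsto (fun ℓ =>
      (∑ j, ‖(NL d n m χ V f (u ℓ) - NL d n m χ V f u₀).1 j‖ ^ 2) +
      ‖(NL d n m χ V f (u ℓ) - NL d n m χ V f u₀).2.1‖ ^ 2 +
      ((eLpNorm (fun k => ((omega d m k ^ σ : ℝ) : ℂ) *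
        (NL d n m χ V f (u ℓ) - NL d n m χ V f u₀).2.2 k) 2 volume).toReal) ^ 2)
      atTop (nhds 0) := by
    simpa using (hA.add hB).add hC
  have hsq := (Real.continuous_sqrt.tendsto 0).comp hT
  rw [Real.sqrt_zero] at hsq
  exact hsq.congr fun ℓ => rfl

end
end
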